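/- The polynomials p(C_{2k}; z) satisfy the recurrence p(C_{2k}; z) = (1+2z)·p(C_{2k−2}; z) − z²·p(C_{2k−4}; z) + z^{k−1} for k ≥ 3. -/

import Mathlib

open Polynomial

variable {V : Type*}

/-- `M` (a finite set of edges) is a matching of the graph `G`:
its members are edges of `G` and no two distinct members share an endpoint. -/
def IsGraphMatching (G : SimpleGraph V) (M : Finset (Sym2 V)) : Prop :=
  (M : Set (Sym2 V)) ⊆ G.edgeSet ∧
    ∀ e ∈ M, ∀ f ∈ M, e ≠ f → ∀ x, x ∈ e → x ∉ f

/-- The set of vertices covered by the edge set `M` is exactly `S`. -/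
def Covers (M : Finset (Sym2 V)) (S : Finset V) : Prop :=
  ∀ x, x ∈ S ↔ ∃ e ∈ M, x ∈ e

/-- `M` is a perfect matching of the induced subgraph `G[S]`. -/
def IsPerfectMatchingOn (G : SimpleGraph V) (M : Finset (Sym2 V)) (S : Finset V) : Prop :=
  IsGraphMatching G M ∧ Covers M S

/-- `S` is a perfectly matchable set of `G`. -/
def IsPMS (G : SimpleGraph V) (S : Finset V) : Prop :=
  ∃ M, IsPerfectMatchingOn G M S

open Classical in
/-- The perfectly matchable set polynomial of the subgraph of `G` induced on the
ground vertex set `A`: the generating function `∑ p_{2k} z^k` where `p_{2k}` is the number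
of perfectly matchable sets `S ⊆ A` with `|S| = 2k`. -/
noncomputable def pmPoly [Fintype V] (G : SimpleGraph V) (A : Finset V) : Polynomial ℤ :=
  ∑ S ∈ A.powerset, if IsPMS G S then X ^ (S.card / 2) else 0

/-- `G` has no cycle of even length. -/
def NoEvenCycle (G : SimpleGraph V) : Prop :=
  ∀ (v : V) (c : G.Walk v v), c.IsCycle → ¬ Even c.length

section NatWorld

def pInd (m : ℕ) : Finset (Finset ℕ) :=
  (Finset.range m).powerset.filter (fun D => ∀ i ∈ D, i + 1 ∉ D)

noncomputable def pPoly (m : ℕ) : Polynomial ℤ := ∑ D ∈ pInd m, X ^ D.card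

def cSet (n : ℕ) : Finset (Finset ℕ) :=
  (Finset.range n).powerset.filter (fun D => (∀ i ∈ D, i + 1 ∉ D) ∧ ¬(0 ∈ D ∧ n - 1 ∈ D))

noncomputable def qPoly (n : ℕ) : Polynomial ℤ := ∑ D ∈ cSet n, X ^ D.card

lemma mem_pInd {m : ℕ} {D : Finset ℕ} :
    D ∈ pInd m ↔ (∀ i ∈ D, i < m) ∧ ∀ i ∈ D, i + 1 ∉ D := by
  simp [pInd, Finset.subset_iff, Finset.mem_powerset, Finset.mem_range]

lemma mem_cSet {n : ℕ} {D : Finset ℕ} :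
    D ∈ cSet n ↔ (∀ i ∈ D, i < n) ∧ (∀ i ∈ D, i + 1 ∉ D) ∧ ¬(0 ∈ D ∧ n - 1 ∈ D) := by
  simp [cSet, Finset.subset_iff, Finset.mem_powerset, Finset.mem_range]

lemma mem_image_sub {D : Finset ℕ} {k : ℕ} (h : ∀ x ∈ D, k ≤ x) {j : ℕ} :
    j ∈ D.image (· - k) ↔ j + k ∈ D := by
  simp only [Finset.mem_image]
  constructor
  · rintro ⟨x, hx, rfl⟩; have := h x hx
    rwa [Nat.sub_add_cancel this]
  · intro hj; exact ⟨j + k, hj, by omega⟩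

lemma mem_image_add {D : Finset ℕ} {k j : ℕ} :
    j ∈ D.image (· + k) ↔ k ≤ j ∧ j - k ∈ D := by
  simp only [Finset.mem_image]
  constructor
  · rintro ⟨x, hx, rfl⟩; exact ⟨by omega, by simpa using hx⟩
  · rintro ⟨h1, h2⟩; exact ⟨j - k, h2, by omega⟩

lemma card_image_sub {D : Finset ℕ} {k : ℕ} (h : ∀ x ∈ D, k ≤ x) :
    (D.image (· - k)).card = D.card := by
  apply Finset.card_image_of_injOn
  intro a ha b hb hab
  have := h a ha; have := h b hb
  simp only at hab; omega

lemma image_sub_add {D : Finset ℕ} {k : ℕ} (h : ∀ x ∈ D, k ≤ x) :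
    (D.image (· - k)).image (· + k) = D := by
  ext j
  rw [mem_image_add]
  constructor
  · rintro ⟨h1, h2⟩; rw [mem_image_sub h] at h2
    rwa [Nat.sub_add_cancel h1] at h2
  · intro hj; have := h j hj
    refine ⟨this, ?_⟩
    rw [mem_image_sub h]
    rwa [Nat.sub_add_cancel this]

lemma image_add_sub {D : Finset ℕ} {k : ℕ} :
    (D.image (· + k)).image (· - k) = D := by
  rw [Finset.image_image]
  have : ((· - k) ∘ (· + k) : ℕ → ℕ) = id := by funext x; simp
  rw [this, Finset.image_id]

lemma qPoly_eq (n : ℕ) : qPoly (n + 3) = pPoly (n + 1) + 2 * X * pPoly n := by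
  classical
  -- split on 0 ∈ D, then on n+2 ∈ D
  have hsplit : qPoly (n+3) =
      (∑ D ∈ (cSet (n+3)).filter (fun D => 0 ∈ D), (X:Polynomial ℤ) ^ D.card)
      + ((∑ D ∈ ((cSet (n+3)).filter (fun D => 0 ∉ D)).filter (fun D => n+2 ∈ D), (X:Polynomial ℤ) ^ D.card)
        + (∑ D ∈ ((cSet (n+3)).filter (fun D => 0 ∉ D)).filter (fun D => n+2 ∉ D), (X:Polynomial ℤ) ^ D.card)) := by
    rw [qPoly, ← Finset.sum_filter_add_sum_filter_not (cSet (n+3)) (fun D => 0 ∈ D)]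
    congr 1
    rw [← Finset.sum_filter_add_sum_filter_not ((cSet (n+3)).filter (fun D => 0 ∉ D)) (fun D => n+2 ∈ D)]
  have hA : ∑ D ∈ ((cSet (n+3)).filter (fun D => 0 ∉ D)).filter (fun D => n+2 ∉ D),
      (X:Polynomial ℤ) ^ D.card = pPoly (n+1) := by
    rw [pPoly, Finset.sum_nbij' (i := fun D => D.image (· - 1)) (j := fun D => D.image (· + 1))]
    · intro D hD
      simp only [Finset.mem_filter, mem_cSet] at hD
      obtain ⟨⟨⟨ha, hb, -⟩, h0⟩, hl⟩ := hD
      have hge : ∀ x ∈ D, 1 ≤ x := fun x hx => by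
        rcases Nat.eq_zero_or_pos x with rfl | h; exact absurd hx h0; omega
      rw [mem_pInd]
      constructor
      · intro i hi
        rw [mem_image_sub hge] at hi
        have := ha _ hi
        have : i + 1 ≠ n + 2 := fun h => hl (h ▸ hi)
        omega
      · intro i hi hc
        rw [mem_image_sub hge] at hi hc
        exact hb _ hi hc
    · intro D hD
      rw [mem_pInd] at hD
      obtain ⟨ha, hb⟩ := hD
      simp only [Finset.mem_filter, mem_cSet]
      have h0 : (0:ℕ) ∉ D.image (· + 1) := by rw [mem_image_add]; omega
      have hl : n + 2 ∉ D.image (· + 1) := by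
        rw [mem_image_add]; rintro ⟨-, h⟩; have := ha _ h; omega
      refine ⟨⟨⟨?_, ?_, ?_⟩, h0⟩, hl⟩
      · intro i hi; rw [mem_image_add] at hi; have := ha _ hi.2; omega
      · intro i hi hc
        rw [mem_image_add] at hi hc
        obtain ⟨hi1, hi2⟩ := hi; obtain ⟨hc1, hc2⟩ := hc
        have : i + 1 - 1 = (i - 1) + 1 := by omega
        rw [this] at hc2
        exact hb _ hi2 hc2
      · rintro ⟨h, -⟩; exact h0 h
    · intro D hD
      simp only [Finset.mem_filter, mem_cSet] at hD
      have hge : ∀ x ∈ D, 1 ≤ x := fun x hx => by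
        rcases Nat.eq_zero_or_pos x with rfl | h; exact absurd hx hD.1.2; omega
      exact image_sub_add hge
    · intro D hD
      exact image_add_sub
    · intro D hD
      simp only [Finset.mem_filter, mem_cSet] at hD
      have hge : ∀ x ∈ D, 1 ≤ x := fun x hx => by
        rcases Nat.eq_zero_or_pos x with rfl | h; exact absurd hx hD.1.2; omega
      rw [card_image_sub hge]
  have hB : ∑ D ∈ (cSet (n+3)).filter (fun D => 0 ∈ D), (X:Polynomial ℤ) ^ D.card
      = X * pPoly n := by
    rw [pPoly, Finset.mul_sum,
      Finset.sum_nbij' (i := fun D => (D.erase 0).image (· - 2))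
        (j := fun D => insert 0 (D.image (· + 2)))]
    · intro D hD
      simp only [Finset.mem_filter, mem_cSet] at hD
      obtain ⟨⟨ha, hb, hc⟩, h0⟩ := hD
      have h1 : (1:ℕ) ∉ D := hb 0 h0
      have hl : n + 2 ∉ D := fun h => hc ⟨h0, by simpa using h⟩
      have hge : ∀ x ∈ D.erase 0, 2 ≤ x := by
        intro x hx
        rw [Finset.mem_erase] at hx
        have : x ≠ 1 := fun h => h1 (h ▸ hx.2)
        have := hx.1; omega
      rw [mem_pInd]
      constructor
      · intro i hi
        rw [mem_image_sub hge] at hi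
        rw [Finset.mem_erase] at hi
        have := ha _ hi.2
        have : i + 2 ≠ n + 2 := fun h => hl (h ▸ hi.2)
        omega
      · intro i hi hc2
        rw [mem_image_sub hge] at hi hc2
        rw [Finset.mem_erase] at hi hc2
        exact hb _ hi.2 (by have h := hc2.2; rwa [show i+1+2 = i+2+1 from by omega] at h)
    · intro D hD
      rw [mem_pInd] at hD
      obtain ⟨ha, hb⟩ := hD
      simp only [Finset.mem_filter, mem_cSet]
      have h2 : ∀ j, j ∈ D.image (· + 2) ↔ 2 ≤ j ∧ j - 2 ∈ D := fun j => mem_image_add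
      refine ⟨⟨?_, ?_, ?_⟩, Finset.mem_insert_self _ _⟩
      · intro i hi
        rcases Finset.mem_insert.1 hi with rfl | hi
        · omega
        · rw [h2] at hi; have := ha _ hi.2; omega
      · intro i hi hc
        rcases Finset.mem_insert.1 hi with rfl | hi
        · rcases Finset.mem_insert.1 hc with h | h
          · omega
          · rw [h2] at h; omega
        · rw [h2] at hi
          rcases Finset.mem_insert.1 hc with h | h
          · omega
          · rw [h2] at h
            refine hb _ hi.2 ?_
            have : i + 1 - 2 = (i - 2) + 1 := by omega
            rw [this] at h
            exact h.2
      · rintro ⟨-, h⟩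
        rcases Finset.mem_insert.1 h with h | h
        · omega
        · rw [h2] at h; have := ha _ h.2; omega
    · intro D hD
      simp only [Finset.mem_filter, mem_cSet] at hD
      obtain ⟨⟨ha, hb, hc⟩, h0⟩ := hD
      have h1 : (1:ℕ) ∉ D := hb 0 h0
      have hge : ∀ x ∈ D.erase 0, 2 ≤ x := by
        intro x hx
        rw [Finset.mem_erase] at hx
        have : x ≠ 1 := fun h => h1 (h ▸ hx.2)
        have := hx.1; omega
      rw [image_sub_add hge, Finset.insert_erase h0]
    · intro D hD
      rw [mem_pInd] at hD
      have h0 : (0:ℕ) ∉ D.image (· + 2) := by rw [mem_image_add]; omega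
      rw [Finset.erase_insert h0, image_add_sub]
    · intro D hD
      simp only [Finset.mem_filter, mem_cSet] at hD
      obtain ⟨⟨ha, hb, hc⟩, h0⟩ := hD
      have h1 : (1:ℕ) ∉ D := hb 0 h0
      have hge : ∀ x ∈ D.erase 0, 2 ≤ x := by
        intro x hx
        rw [Finset.mem_erase] at hx
        have : x ≠ 1 := fun h => h1 (h ▸ hx.2)
        have := hx.1; omega
      rw [card_image_sub hge, Finset.card_erase_of_mem h0, ← pow_succ']
      congr 1
      have : 0 < D.card := Finset.card_pos.2 ⟨_, h0⟩
      omega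
  have hC : ∑ D ∈ ((cSet (n+3)).filter (fun D => 0 ∉ D)).filter (fun D => n+2 ∈ D),
      (X:Polynomial ℤ) ^ D.card = X * pPoly n := by
    rw [pPoly, Finset.mul_sum,
      Finset.sum_nbij' (i := fun D => (D.erase (n+2)).image (· - 1))
        (j := fun D => insert (n+2) (D.image (· + 1)))]
    · intro D hD
      simp only [Finset.mem_filter, mem_cSet] at hD
      obtain ⟨⟨⟨ha, hb, -⟩, h0⟩, hl⟩ := hD
      have hn1 : n + 1 ∉ D := fun h => hb _ h hl
      have hge : ∀ x ∈ D.erase (n+2), 1 ≤ x := by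
        intro x hx
        rw [Finset.mem_erase] at hx
        rcases Nat.eq_zero_or_pos x with rfl | h; exact absurd hx.2 h0; omega
      rw [mem_pInd]
      constructor
      · intro i hi
        rw [mem_image_sub hge] at hi
        rw [Finset.mem_erase] at hi
        have := ha _ hi.2
        have h4 : i + 1 ≠ n + 2 := hi.1
        have h5 : i + 1 ≠ n + 1 := fun h => hn1 (h ▸ hi.2)
        omega
      · intro i hi hc2
        rw [mem_image_sub hge] at hi hc2
        rw [Finset.mem_erase] at hi hc2
        exact hb _ hi.2 hc2.2
    · intro D hD
      rw [mem_pInd] at hD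
      obtain ⟨ha, hb⟩ := hD
      simp only [Finset.mem_filter, mem_cSet]
      have h2 : ∀ j, j ∈ D.image (· + 1) ↔ 1 ≤ j ∧ j - 1 ∈ D := fun j => mem_image_add
      have h0 : (0:ℕ) ∉ insert (n+2) (D.image (· + 1)) := by
        intro h
        rcases Finset.mem_insert.1 h with h | h
        · omega
        · rw [h2] at h; omega
      refine ⟨⟨⟨?_, ?_, fun h => h0 h.1⟩, h0⟩, Finset.mem_insert_self _ _⟩
      · intro i hi
        rcases Finset.mem_insert.1 hi with rfl | hi
        · omega
        · rw [h2] at hi; have := ha _ hi.2; omega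
      · intro i hi hc
        rcases Finset.mem_insert.1 hi with rfl | hi
        · rcases Finset.mem_insert.1 hc with h | h
          · omega
          · rw [h2] at h; have := ha _ h.2; omega
        · rw [h2] at hi
          rcases Finset.mem_insert.1 hc with h | h
          · have := ha _ hi.2; omega
          · rw [h2] at h
            refine hb _ hi.2 ?_
            have : i + 1 - 1 = (i - 1) + 1 := by omega
            rw [this] at h
            exact h.2
    · intro D hD
      simp only [Finset.mem_filter, mem_cSet] at hD
      obtain ⟨⟨⟨ha, hb, -⟩, h0⟩, hl⟩ := hD
      have hge : ∀ x ∈ D.erase (n+2), 1 ≤ x := by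
        intro x hx
        rw [Finset.mem_erase] at hx
        rcases Nat.eq_zero_or_pos x with rfl | h; exact absurd hx.2 h0; omega
      rw [image_sub_add hge, Finset.insert_erase hl]
    · intro D hD
      rw [mem_pInd] at hD
      have hl : n + 2 ∉ D.image (· + 1) := by
        rw [mem_image_add]; rintro ⟨-, h⟩; have := hD.1 _ h; omega
      rw [Finset.erase_insert hl, image_add_sub]
    · intro D hD
      simp only [Finset.mem_filter, mem_cSet] at hD
      obtain ⟨⟨⟨ha, hb, -⟩, h0⟩, hl⟩ := hD
      have hge : ∀ x ∈ D.erase (n+2), 1 ≤ x := by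
        intro x hx
        rw [Finset.mem_erase] at hx
        rcases Nat.eq_zero_or_pos x with rfl | h; exact absurd hx.2 h0; omega
      rw [card_image_sub hge, Finset.card_erase_of_mem hl, ← pow_succ']
      congr 1
      have : 0 < D.card := Finset.card_pos.2 ⟨_, hl⟩
      omega
  rw [hsplit, hA, hB, hC]
  ring

lemma pPoly_rec (m : ℕ) : pPoly (m + 2) = pPoly (m + 1) + X * pPoly m := by
  classical
  have h1 : ∑ D ∈ (pInd (m+2)).filter (fun D => (m+1) ∉ D), (X:Polynomial ℤ) ^ D.card
      = pPoly (m + 1) := by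
    rw [pPoly]
    congr 1
    ext D
    simp only [Finset.mem_filter, mem_pInd]
    constructor
    · rintro ⟨⟨ha, hb⟩, hc⟩
      exact ⟨fun i hi => by have := ha i hi; have : i ≠ m+1 := fun h => hc (h ▸ hi); omega, hb⟩
    · rintro ⟨ha, hb⟩
      exact ⟨⟨fun i hi => by have := ha i hi; omega, hb⟩, fun hc => by have := ha _ hc; omega⟩
  have h2 : ∑ D ∈ (pInd (m+2)).filter (fun D => (m+1) ∈ D), (X:Polynomial ℤ) ^ D.card
      = X * pPoly m := by
    rw [pPoly, Finset.mul_sum, Finset.sum_nbij' (i := fun D => D.erase (m+1))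
      (j := fun D => insert (m+1) D)]
    · intro D hD
      simp only [Finset.mem_filter, mem_pInd] at hD ⊢
      obtain ⟨⟨ha, hb⟩, hc⟩ := hD
      refine ⟨fun i hi => ?_, fun i hi => ?_⟩
      · rw [Finset.mem_erase] at hi
        have h4 := ha i hi.2
        have hm : m ∉ D := fun hm => hb m hm hc
        have h5 : i ≠ m := fun h => hm (h ▸ hi.2)
        have h6 : i ≠ m + 1 := hi.1
        omega
      · rw [Finset.mem_erase] at hi
        intro hcc
        exact hb i hi.2 (Finset.mem_of_mem_erase hcc)
    · intro D hD
      simp only [mem_pInd] at hD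
      simp only [Finset.mem_filter, mem_pInd]
      obtain ⟨ha, hb⟩ := hD
      refine ⟨⟨fun i hi => ?_, fun i hi hcc => ?_⟩, Finset.mem_insert_self _ _⟩
      · rcases Finset.mem_insert.1 hi with rfl | hi
        · omega
        · have := ha i hi; omega
      · rcases Finset.mem_insert.1 hi with rfl | hi
        · rcases Finset.mem_insert.1 hcc with h | h
          · omega
          · have := ha _ h; omega
        · rcases Finset.mem_insert.1 hcc with h | h
          · have := ha i hi; omega
          · exact hb i hi h
    · intro D hD
      simp only [Finset.mem_filter] at hD
      exact Finset.insert_erase hD.2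
    · intro D hD
      simp only [mem_pInd] at hD
      refine Finset.erase_insert (fun hc => ?_)
      have := hD.1 _ hc; omega
    · intro D hD
      simp only [Finset.mem_filter] at hD
      rw [Finset.card_erase_of_mem hD.2, ← pow_succ']
      congr 1
      have : 0 < D.card := Finset.card_pos.2 ⟨_, hD.2⟩
      omega
  rw [pPoly, ← Finset.sum_filter_add_sum_filter_not (pInd (m+2)) (fun D => (m+1) ∈ D), h2]
  rw [h1]
  ring

lemma pInd_zero : pInd 0 = {∅} := by decide
lemma pInd_one : pInd 1 = {∅, {0}} := by decide
lemma cSet_two : cSet 2 = {∅, {0}, {1}} := by decide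

lemma pPoly_zero : pPoly 0 = 1 := by simp [pPoly, pInd_zero]
lemma pPoly_one : pPoly 1 = 1 + X := by
  rw [pPoly, pInd_one, Finset.sum_insert (by decide), Finset.sum_singleton]
  simp
lemma qPoly_two : qPoly 2 = 1 + 2 * X := by
  rw [qPoly, cSet_two, Finset.sum_insert (by decide), Finset.sum_insert (by decide),
    Finset.sum_singleton]
  simp; ring

lemma q_identity (m : ℕ) :
    qPoly (2*m+6) = (1 + 2*X) * qPoly (2*m+4) - X^2 * qPoly (2*m+2) := by
  cases m with
  | zero =>
    have e6 : qPoly 6 = pPoly 4 + 2 * X * pPoly 3 := qPoly_eq 3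
    have e4 : qPoly 4 = pPoly 2 + 2 * X * pPoly 1 := qPoly_eq 1
    have p2 : pPoly 2 = pPoly 1 + X * pPoly 0 := pPoly_rec 0
    have p3 : pPoly 3 = pPoly 2 + X * pPoly 1 := pPoly_rec 1
    have p4 : pPoly 4 = pPoly 3 + X * pPoly 2 := pPoly_rec 2
    simp only [show (2*0+6 : ℕ) = 6 from rfl, show (2*0+4 : ℕ) = 4 from rfl,
      show (2*0+2 : ℕ) = 2 from rfl]
    rw [e6, e4, p4, p3, p2, qPoly_two, pPoly_one, pPoly_zero]
    ring
  | succ t =>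
    have e6 : qPoly (2*(t+1)+6) = pPoly (2*t+6) + 2 * X * pPoly (2*t+5) := by
      have := qPoly_eq (2*t+5); convert this using 2 <;> omega
    have e4 : qPoly (2*(t+1)+4) = pPoly (2*t+4) + 2 * X * pPoly (2*t+3) := by
      have := qPoly_eq (2*t+3); convert this using 2 <;> omega
    have e2 : qPoly (2*(t+1)+2) = pPoly (2*t+2) + 2 * X * pPoly (2*t+1) := by
      have := qPoly_eq (2*t+1); convert this using 2 <;> omega
    have p3 : pPoly (2*t+3) = pPoly (2*t+2) + X * pPoly (2*t+1) := pPoly_rec (2*t+1)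
    have p4 : pPoly (2*t+4) = pPoly (2*t+3) + X * pPoly (2*t+2) := pPoly_rec (2*t+2)
    have p5 : pPoly (2*t+5) = pPoly (2*t+4) + X * pPoly (2*t+3) := pPoly_rec (2*t+3)
    have p6 : pPoly (2*t+6) = pPoly (2*t+5) + X * pPoly (2*t+4) := pPoly_rec (2*t+4)
    rw [e6, e4, e2, p6, p5, p4, p3]
    ring

end NatWorld

section FinWorld

variable {n : ℕ}

open Fin.CommRing

lemma vsucc [NeZero n] (i : Fin n) : (i + 1 : Fin n).val = (i.val + 1) % n := by
  rw [Fin.add_def, Fin.val_one']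
  have h1 : i.val < n := i.isLt
  have h0 : 0 < n := Nat.pos_of_ne_zero (NeZero.ne n)
  rcases Nat.lt_or_ge 1 n with h | h
  · rw [Nat.mod_eq_of_lt h]
  · interval_cases n
    omega

lemma vsucc2 (hn : 2 ≤ n) [NeZero n] (i : Fin n) :
    (i + 1 : Fin n).val = if i.val = n - 1 then 0 else i.val + 1 := by
  rw [vsucc]
  have h1 : i.val < n := i.isLt
  rcases eq_or_ne i.val (n-1) with h | h
  · rw [if_pos h, h, show n - 1 + 1 = n by omega, Nat.mod_self]
  · rw [if_neg h, Nat.mod_eq_of_lt (by omega)]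

lemma val_one2 (hn : 2 ≤ n) [NeZero n] : (1 : Fin n).val = 1 := by
  rw [Fin.val_one', Nat.mod_eq_of_lt hn]

lemma fin_succ_ne_self (hn : 2 ≤ n) [NeZero n] (i : Fin n) : i + 1 ≠ i := by
  intro h
  have := congrArg Fin.val h
  rw [vsucc2 hn] at this
  have h1 : i.val < n := i.isLt
  split at this <;> omega

lemma adj_succ (hn : 2 ≤ n) [NeZero n] (i : Fin n) :
    (SimpleGraph.cycleGraph n).Adj i (i + 1) := by
  rw [SimpleGraph.cycleGraph_adj']
  right
  rw [add_sub_cancel_left, val_one2 hn]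

lemma adj_cases [NeZero n] {a b : Fin n} (h : (SimpleGraph.cycleGraph n).Adj a b) :
    b = a + 1 ∨ a = b + 1 := by
  have hne : a ≠ b := h.ne
  have h2 : 2 ≤ n := by
    by_contra hc
    have := a.isLt
    have := b.isLt
    have : a = b := Fin.ext (by omega)
    exact hne this
  rw [SimpleGraph.cycleGraph_adj'] at h
  rcases h with h | h
  · right
    have h3 : a - b = 1 := Fin.ext (by rw [val_one2 h2]; exact h)
    rw [sub_eq_iff_eq_add] at h3
    rw [h3]; ring
  · left
    have h3 : b - a = 1 := Fin.ext (by rw [val_one2 h2]; exact h)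
    rw [sub_eq_iff_eq_add] at h3
    rw [h3]; ring

def CInd [NeZero n] (D : Finset (Fin n)) : Prop := ∀ i ∈ D, i + 1 ∉ D

def fsupp [NeZero n] (D : Finset (Fin n)) : Finset (Fin n) := D ∪ D.image (· + 1)

lemma mem_fsupp [NeZero n] {D : Finset (Fin n)} {x : Fin n} :
    x ∈ fsupp D ↔ x ∈ D ∨ ∃ j ∈ D, j + 1 = x := by
  simp only [fsupp, Finset.mem_union, Finset.mem_image]

lemma fsupp_add_one [NeZero n] {D : Finset (Fin n)} {i : Fin n} :
    i + 1 ∈ fsupp D ↔ i + 1 ∈ D ∨ i ∈ D := by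
  rw [mem_fsupp]
  constructor
  · rintro (h | ⟨j, hj, hji⟩)
    · exact Or.inl h
    · right
      have : j = i := by
        have := add_left_injective (1:Fin n) hji
        simpa using this
      exact this ▸ hj
  · rintro (h | h)
    · exact Or.inl h
    · exact Or.inr ⟨i, h, rfl⟩

lemma csucc_mem [NeZero n] {D : Finset (Fin n)} (hD : CInd D) (i : Fin n) :
    i + 1 ∈ D ↔ (i + 1 ∈ fsupp D ∧ i ∉ D) := by
  constructor
  · intro h
    refine ⟨mem_fsupp.2 (Or.inl h), fun hi => hD i hi h⟩
  · rintro ⟨h1, h2⟩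
    rcases fsupp_add_one.1 h1 with h | h
    · exact h
    · exact absurd h h2

lemma supp_card [NeZero n] {D : Finset (Fin n)} (hD : CInd D) :
    (fsupp D).card = 2 * D.card := by
  rw [fsupp, Finset.card_union_of_disjoint, Finset.card_image_of_injective _ (add_left_injective 1)]
  · omega
  · rw [Finset.disjoint_left]
    intro x hx hx2
    rw [Finset.mem_image] at hx2
    obtain ⟨j, hj, hji⟩ := hx2
    exact hD j hj (hji ▸ hx)

lemma supp_isPMS (hn : 2 ≤ n) [NeZero n] {D : Finset (Fin n)} (hD : CInd D) :
    IsPMS (SimpleGraph.cycleGraph n) (fsupp D) := by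
  classical
  refine ⟨D.image (fun i => s(i, i + 1)), ⟨?_, ?_⟩, ?_⟩
  · intro e he
    rw [Finset.coe_image, Set.mem_image] at he
    obtain ⟨i, hi, rfl⟩ := he
    exact (SimpleGraph.mem_edgeSet _).2 (adj_succ hn i)
  · intro e he f hf hef x hxe hxf
    rw [Finset.mem_image] at he hf
    obtain ⟨i, hi, rfl⟩ := he
    obtain ⟨j, hj, rfl⟩ := hf
    have hij : i ≠ j := fun h => hef (h ▸ rfl)
    rw [Sym2.mem_iff] at hxe hxf
    rcases hxe with rfl | rfl <;> rcases hxf with h | h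
    · exact hij h
    · exact hD j hj (h ▸ hi)
    · exact hD i hi (h ▸ hj)
    · exact hij (by have := add_left_injective (1:Fin n) h; simpa using this)
  · intro x
    rw [mem_fsupp]
    constructor
    · rintro (h | ⟨j, hj, rfl⟩)
      · exact ⟨s(x, x+1), Finset.mem_image_of_mem _ h, Sym2.mem_mk_left _ _⟩
      · exact ⟨s(j, j+1), Finset.mem_image_of_mem _ hj, Sym2.mem_mk_right _ _⟩
    · rintro ⟨e, he, hxe⟩
      rw [Finset.mem_image] at he
      obtain ⟨i, hi, rfl⟩ := he
      rw [Sym2.mem_iff] at hxe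
      rcases hxe with rfl | rfl
      · exact Or.inl hi
      · exact Or.inr ⟨i, hi, rfl⟩

lemma fin_two_ne (hn : 3 ≤ n) [NeZero n] (i : Fin n) : i + 1 + 1 ≠ i := by
  intro h
  have h2 : 2 ≤ n := by omega
  have := congrArg Fin.val h
  rw [vsucc2 h2, vsucc2 h2] at this
  have h5 := i.isLt
  rcases eq_or_ne (i.val) (n-1) with h3 | h3
  · rw [if_pos h3] at this
    rw [if_neg (by omega)] at this
    omega
  · rw [if_neg h3] at this
    by_cases h4 : i.val + 1 = n - 1
    · rw [if_pos h4] at this; omega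
    · rw [if_neg h4] at this; omega

lemma pms_exists_D (hn : 3 ≤ n) [NeZero n] {S : Finset (Fin n)}
    (hS : IsPMS (SimpleGraph.cycleGraph n) S) : ∃ D, CInd D ∧ fsupp D = S := by
  classical
  obtain ⟨M, ⟨hedge, hdisj⟩, hcov⟩ := hS
  have h2 : 2 ≤ n := by omega
  have hform : ∀ e ∈ M, ∃ i, e = s(i, i + 1) := by
    intro e he
    have : e ∈ (SimpleGraph.cycleGraph n).edgeSet := hedge he
    induction e with
    | _ a b =>
      rw [SimpleGraph.mem_edgeSet] at this
      rcases adj_cases this with h | h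
      · exact ⟨a, by rw [h]⟩
      · exact ⟨b, by rw [h, Sym2.eq_swap]⟩
  refine ⟨Finset.univ.filter (fun i => s(i, i + 1) ∈ M), ?_, ?_⟩
  · intro i hi hi1
    rw [Finset.mem_filter] at hi hi1
    have hne : s(i, i+1) ≠ s(i+1, i+1+1) := by
      intro h
      rw [Sym2.eq_iff] at h
      rcases h with ⟨h, -⟩ | ⟨h, -⟩
      · exact fin_succ_ne_self h2 i h.symm
      · exact fin_two_ne hn i h.symm
    exact hdisj _ hi.2 _ hi1.2 hne (i+1) (Sym2.mem_mk_right _ _) (Sym2.mem_mk_left _ _)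
  · ext x
    rw [mem_fsupp]
    constructor
    · rintro (h | ⟨j, hj, rfl⟩)
      · rw [Finset.mem_filter] at h
        exact (hcov x).2 ⟨_, h.2, Sym2.mem_mk_left _ _⟩
      · rw [Finset.mem_filter] at hj
        exact (hcov _).2 ⟨_, hj.2, Sym2.mem_mk_right _ _⟩
    · intro hx
      obtain ⟨e, he, hxe⟩ := (hcov x).1 hx
      obtain ⟨i, rfl⟩ := hform e he
      rw [Sym2.mem_iff] at hxe
      rcases hxe with rfl | rfl
      · exact Or.inl (Finset.mem_filter.2 ⟨Finset.mem_univ _, he⟩)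
      · exact Or.inr ⟨i, Finset.mem_filter.2 ⟨Finset.mem_univ _, he⟩, rfl⟩

lemma subset_fsupp [NeZero n] {D : Finset (Fin n)} : D ⊆ fsupp D := fun x hx =>
  mem_fsupp.2 (Or.inl hx)

lemma supp_inj [NeZero n] {D D' : Finset (Fin n)} (hD : CInd D) (hD' : CInd D')
    (h : fsupp D = fsupp D') (hne : fsupp D ≠ Finset.univ) : D = D' := by
  have hg : ∃ g, g ∉ fsupp D := by
    by_contra hc
    push_neg at hc
    exact hne (Finset.eq_univ_iff_forall.2 hc)
  obtain ⟨g, hg⟩ := hg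
  have key : ∀ t : ℕ, (g + (t : Fin n) ∈ D ↔ g + (t : Fin n) ∈ D') := by
    intro t
    induction t with
    | zero =>
      simp only [Nat.cast_zero, add_zero]
      constructor
      · intro hgd; exact absurd (subset_fsupp hgd) hg
      · intro hgd; exact absurd (subset_fsupp hgd) (h ▸ hg)
    | succ t ih =>
      have hc : ((t + 1 : ℕ) : Fin n) = (t : Fin n) + 1 := by push_cast; ring
      rw [hc, ← add_assoc, csucc_mem hD, csucc_mem hD', h, ih]
  ext i
  have : i = g + (((i - g).val : ℕ) : Fin n) := by
    rw [Fin.cast_val_eq_self, add_sub_cancel]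
  rw [this]
  exact key _

lemma full_alt [NeZero n] {D : Finset (Fin n)} (hD : CInd D) (hfull : fsupp D = Finset.univ)
    (i : Fin n) : i + 1 ∈ D ↔ i ∉ D := by
  rw [csucc_mem hD, hfull]
  simp

lemma full_inj [NeZero n] {D D' : Finset (Fin n)} (hD : CInd D) (hD' : CInd D')
    (hf : fsupp D = Finset.univ) (hf' : fsupp D' = Finset.univ)
    (h0 : (0 : Fin n) ∈ D ↔ (0 : Fin n) ∈ D') : D = D' := by
  have key : ∀ t : ℕ, ((t : Fin n) ∈ D ↔ (t : Fin n) ∈ D') := by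
    intro t
    induction t with
    | zero => exact_mod_cast h0
    | succ t ih =>
      have hc : ((t + 1 : ℕ) : Fin n) = (t : Fin n) + 1 := by push_cast; ring
      rw [hc, full_alt hD hf, full_alt hD' hf', ih]
  ext i
  have : i = ((i.val : ℕ) : Fin n) := (Fin.cast_val_eq_self i).symm
  rw [this]
  exact key _

section evenodd
variable (hn2 : 2 ≤ n) (hne : Even n) [NeZero n]

def Ev (n : ℕ) : Finset (Fin n) := Finset.univ.filter (fun i => i.val % 2 = 0)
def Od (n : ℕ) : Finset (Fin n) := Finset.univ.filter (fun i => i.val % 2 = 1)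

include hn2 hne in
lemma Ev_CInd : CInd (Ev n) := by
  intro i hi hi1
  simp only [Ev, Finset.mem_filter] at hi hi1
  rw [vsucc2 hn2] at hi1
  obtain ⟨j, rfl⟩ := hne
  have := i.isLt
  obtain ⟨-, hi1⟩ := hi1
  split at hi1 <;> omega

include hn2 hne in
lemma Od_CInd : CInd (Od n) := by
  intro i hi hi1
  simp only [Od, Finset.mem_filter] at hi hi1
  rw [vsucc2 hn2] at hi1
  obtain ⟨j, rfl⟩ := hne
  have := i.isLt
  obtain ⟨-, hi1⟩ := hi1
  split at hi1 <;> omega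

include hn2 hne in
lemma Ev_full : fsupp (Ev n) = Finset.univ := by
  apply Finset.eq_univ_iff_forall.2
  intro x
  rw [mem_fsupp]
  obtain ⟨m, hm⟩ := hne
  have hx := x.isLt
  rcases Nat.mod_two_eq_zero_or_one x.val with h | h
  · exact Or.inl (Finset.mem_filter.2 ⟨Finset.mem_univ _, h⟩)
  · right
    refine ⟨⟨x.val - 1, by omega⟩, Finset.mem_filter.2 ⟨Finset.mem_univ _, by
      simp only; omega⟩, ?_⟩
    apply Fin.ext
    rw [vsucc2 hn2]
    simp only
    split <;> omega

include hn2 hne in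
lemma Od_full : fsupp (Od n) = Finset.univ := by
  apply Finset.eq_univ_iff_forall.2
  intro x
  rw [mem_fsupp]
  obtain ⟨m, hm⟩ := hne
  have hx := x.isLt
  rcases Nat.mod_two_eq_zero_or_one x.val with h | h
  · right
    rcases Nat.eq_zero_or_pos x.val with h0 | h0
    · refine ⟨⟨n - 1, by omega⟩, Finset.mem_filter.2 ⟨Finset.mem_univ _, by
        simp only; omega⟩, ?_⟩
      apply Fin.ext
      rw [vsucc2 hn2]
      simp only
      split
      · omega
      · simp_all
    · refine ⟨⟨x.val - 1, by omega⟩, Finset.mem_filter.2 ⟨Finset.mem_univ _, by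
        simp only; omega⟩, ?_⟩
      apply Fin.ext
      rw [vsucc2 hn2]
      simp only
      split <;> omega
  · exact Or.inl (Finset.mem_filter.2 ⟨Finset.mem_univ _, h⟩)

include hn2 in
lemma Ev_ne_Od : (Ev n) ≠ (Od n) := by
  intro h
  have h0 : (0 : Fin n) ∈ (Ev n) := Finset.mem_filter.2 ⟨Finset.mem_univ _, by simp⟩
  rw [h, Od, Finset.mem_filter] at h0
  simp at h0

end evenodd

lemma transfer (hn : 2 ≤ n) [NeZero n] [DecidablePred (CInd (n := n))] :
    ∑ D ∈ Finset.univ.filter (fun D : Finset (Fin n) => CInd D), (X : Polynomial ℤ) ^ D.card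
      = qPoly n := by
  rw [qPoly, Finset.sum_nbij' (i := fun D => D.image Fin.val)
    (j := fun E => E.image (Nat.cast : ℕ → Fin n))]
  · intro D hDm
    rw [Finset.mem_filter] at hDm
    have hD := hDm.2
    rw [mem_cSet]
    refine ⟨?_, ?_, ?_⟩
    · intro i hi
      rw [Finset.mem_image] at hi
      obtain ⟨a, -, rfl⟩ := hi
      exact a.isLt
    · intro i hi hi1
      rw [Finset.mem_image] at hi hi1
      obtain ⟨a, ha, rfl⟩ := hi
      obtain ⟨b, hb, hba⟩ := hi1
      have hb2 := b.isLt
      have hab : a + 1 = b := by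
        apply Fin.ext
        rw [vsucc2 hn, if_neg (by omega)]
        omega
      exact hD a ha (hab ▸ hb)
    · rintro ⟨h0, hl⟩
      rw [Finset.mem_image] at h0 hl
      obtain ⟨a, ha, hav⟩ := h0
      obtain ⟨b, hb, hbv⟩ := hl
      have : b + 1 = a := by
        apply Fin.ext
        rw [vsucc2 hn, if_pos hbv]
        omega
      exact hD b hb (this ▸ ha)
  · intro E hE
    rw [mem_cSet] at hE
    obtain ⟨hb, hc, hd⟩ := hE
    rw [Finset.mem_filter]
    refine ⟨Finset.mem_univ _, ?_⟩
    intro i hi hi1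
    rw [Finset.mem_image] at hi hi1
    obtain ⟨a, ha, rfl⟩ := hi
    obtain ⟨b2, hb2, hb2v⟩ := hi1
    have hal := hb a ha
    have hbl := hb b2 hb2
    have hv1 : ((a : Fin n)).val = a := Fin.val_cast_of_lt hal
    have hv2 : ((b2 : Fin n)).val = b2 := Fin.val_cast_of_lt hbl
    have := congrArg Fin.val hb2v
    rw [vsucc2 hn, hv1, hv2] at this
    rcases eq_or_ne a (n - 1) with h | h
    · rw [if_pos h] at this
      exact hd ⟨(by omega : b2 = 0) ▸ hb2, h ▸ ha⟩
    · rw [if_neg h] at this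
      exact hc a ha (this ▸ hb2)
  · intro D hD
    rw [Finset.image_image]
    have : ((Nat.cast : ℕ → Fin n) ∘ Fin.val) = id := by
      funext x
      exact Fin.cast_val_eq_self x
    rw [this, Finset.image_id]
  · intro E hE
    rw [mem_cSet] at hE
    rw [Finset.image_image]
    rw [Finset.image_congr (g := id), Finset.image_id]
    intro a ha
    exact Fin.val_cast_of_lt (hE.1 a ha)
  · intro D hD
    rw [Finset.card_image_of_injective _ Fin.val_injective]

lemma link (j : ℕ) (hj : 2 ≤ j) :
    pmPoly (SimpleGraph.cycleGraph (2 * j)) Finset.univ = qPoly (2 * j) - X ^ j := by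
  classical
  haveI : NeZero (2 * j) := ⟨by omega⟩
  have hn2 : 2 ≤ 2 * j := by omega
  have hn3 : 3 ≤ 2 * j := by omega
  have heven : Even (2 * j) := ⟨j, by omega⟩
  set n : ℕ := 2 * j with hn
  -- the matching-side sum
  have htrans : ∑ D ∈ Finset.univ.filter (fun D : Finset (Fin n) => CInd D),
      (X : Polynomial ℤ) ^ D.card = qPoly n := transfer hn2
  have hsplit1 : ∑ D ∈ Finset.univ.filter (fun D : Finset (Fin n) => CInd D),
      (X : Polynomial ℤ) ^ D.card
      = (∑ D ∈ (Finset.univ.filter (fun D : Finset (Fin n) => CInd D)).filter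
          (fun D => fsupp D = Finset.univ), (X : Polynomial ℤ) ^ D.card)
        + ∑ D ∈ (Finset.univ.filter (fun D : Finset (Fin n) => CInd D)).filter
          (fun D => ¬ fsupp D = Finset.univ), (X : Polynomial ℤ) ^ D.card :=
    (Finset.sum_filter_add_sum_filter_not _ _ _).symm
  have hfullset : (Finset.univ.filter (fun D : Finset (Fin n) => CInd D)).filter
      (fun D => fsupp D = Finset.univ) = {Ev n, Od n} := by
    ext D
    simp only [Finset.mem_filter, Finset.mem_univ, true_and, Finset.mem_insert,
      Finset.mem_singleton]
    constructor
    · rintro ⟨hD, hfull⟩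
      by_cases h0 : (0 : Fin n) ∈ D
      · left
        refine full_inj hD (Ev_CInd hn2 heven) hfull (Ev_full hn2 heven) ?_
        simp only [Ev, Finset.mem_filter, Finset.mem_univ, true_and]
        simp [h0]
      · right
        refine full_inj hD (Od_CInd hn2 heven) hfull (Od_full hn2 heven) ?_
        simp only [Od, Finset.mem_filter, Finset.mem_univ, true_and]
        simp [h0]
    · rintro (rfl | rfl)
      · exact ⟨Ev_CInd hn2 heven, Ev_full hn2 heven⟩
      · exact ⟨Od_CInd hn2 heven, Od_full hn2 heven⟩
  have hEvcard : (Ev n).card = j := by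
    have h1 := supp_card (Ev_CInd hn2 heven)
    rw [Ev_full hn2 heven, Finset.card_univ, Fintype.card_fin] at h1
    omega
  have hOdcard : (Od n).card = j := by
    have h1 := supp_card (Od_CInd hn2 heven)
    rw [Od_full hn2 heven, Finset.card_univ, Fintype.card_fin] at h1
    omega
  have hfullsum : ∑ D ∈ ({Ev n, Od n} : Finset (Finset (Fin n))),
      (X : Polynomial ℤ) ^ D.card = 2 * X ^ j := by
    rw [Finset.sum_pair (Ev_ne_Od hn2), hEvcard, hOdcard]
    ring
  -- the PMS-side sum
  have hpm : pmPoly (SimpleGraph.cycleGraph n) Finset.univ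
      = ∑ S ∈ (Finset.univ.powerset.filter
          (fun S : Finset (Fin n) => IsPMS (SimpleGraph.cycleGraph n) S)),
        (X : Polynomial ℤ) ^ (S.card / 2) := by
    rw [pmPoly, Finset.sum_filter]
  have hsplit2 : ∑ S ∈ (Finset.univ.powerset.filter
        (fun S : Finset (Fin n) => IsPMS (SimpleGraph.cycleGraph n) S)),
      (X : Polynomial ℤ) ^ (S.card / 2)
      = (∑ S ∈ ((Finset.univ.powerset.filter
          (fun S : Finset (Fin n) => IsPMS (SimpleGraph.cycleGraph n) S)).filter
          (fun S => S = Finset.univ)), (X : Polynomial ℤ) ^ (S.card / 2))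
        + ∑ S ∈ ((Finset.univ.powerset.filter
          (fun S : Finset (Fin n) => IsPMS (SimpleGraph.cycleGraph n) S)).filter
          (fun S => ¬ S = Finset.univ)), (X : Polynomial ℤ) ^ (S.card / 2) :=
    (Finset.sum_filter_add_sum_filter_not _ _ _).symm
  have hunivset : ((Finset.univ.powerset.filter
      (fun S : Finset (Fin n) => IsPMS (SimpleGraph.cycleGraph n) S)).filter
      (fun S => S = Finset.univ)) = {Finset.univ} := by
    ext S
    simp only [Finset.mem_filter, Finset.mem_powerset, Finset.mem_singleton]
    constructor
    · rintro ⟨-, h⟩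
      exact h
    · rintro rfl
      exact ⟨⟨Finset.subset_univ _, Ev_full hn2 heven ▸ supp_isPMS hn2 (Ev_CInd hn2 heven)⟩, rfl⟩
  have hunivsum : ∑ S ∈ ({Finset.univ} : Finset (Finset (Fin n))),
      (X : Polynomial ℤ) ^ (S.card / 2) = X ^ j := by
    rw [Finset.sum_singleton, Finset.card_univ, Fintype.card_fin]
    congr 1
    omega
  -- the bijection between the two "rest" sums
  have hrest : ∑ D ∈ (Finset.univ.filter (fun D : Finset (Fin n) => CInd D)).filter
        (fun D => ¬ fsupp D = Finset.univ), (X : Polynomial ℤ) ^ D.card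
      = ∑ S ∈ ((Finset.univ.powerset.filter
          (fun S : Finset (Fin n) => IsPMS (SimpleGraph.cycleGraph n) S)).filter
          (fun S => ¬ S = Finset.univ)), (X : Polynomial ℤ) ^ (S.card / 2) := by
    refine Finset.sum_bij (fun D _ => fsupp D) ?_ ?_ ?_ ?_
    · intro D hD
      simp only [Finset.mem_filter, Finset.mem_univ, true_and] at hD
      simp only [Finset.mem_filter, Finset.mem_powerset]
      exact ⟨⟨Finset.subset_univ _, supp_isPMS hn2 hD.1⟩, hD.2⟩
    · intro D hD D' hD' h
      simp only [Finset.mem_filter, Finset.mem_univ, true_and] at hD hD'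
      exact supp_inj hD.1 hD'.1 h hD.2
    · intro S hS
      simp only [Finset.mem_filter, Finset.mem_powerset] at hS
      obtain ⟨⟨-, hpms⟩, hne⟩ := hS
      obtain ⟨D, hD, hDS⟩ := pms_exists_D hn3 hpms
      refine ⟨D, ?_, hDS⟩
      simp only [Finset.mem_filter, Finset.mem_univ, true_and]
      exact ⟨hD, hDS ▸ hne⟩
    · intro D hD
      simp only [Finset.mem_filter, Finset.mem_univ, true_and] at hD
      rw [supp_card hD.1]
      congr 1
      omega
  rw [hpm, hsplit2, hunivset, hunivsum, ← hrest]
  have : qPoly n = 2 * X ^ j + ∑ D ∈ (Finset.univ.filter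
      (fun D : Finset (Fin n) => CInd D)).filter
      (fun D => ¬ fsupp D = Finset.univ), (X : Polynomial ℤ) ^ D.card := by
    rw [← htrans, hsplit1, hfullset, hfullsum]
  rw [this]
  ring

lemma not_pms_singleton (G : SimpleGraph V) (x : V) : ¬ IsPMS G {x} := by
  rintro ⟨M, ⟨hedge, -⟩, hcov⟩
  obtain ⟨e, heM, hxe⟩ := (hcov x).1 (Finset.mem_singleton_self x)
  have he : e ∈ G.edgeSet := hedge heM
  induction e with
  | _ a b =>
    have hab : G.Adj a b := (SimpleGraph.mem_edgeSet _).1 he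
    have haS : a ∈ ({x} : Finset V) := (hcov a).2 ⟨_, heM, Sym2.mem_mk_left _ _⟩
    have hbS : b ∈ ({x} : Finset V) := (hcov b).2 ⟨_, heM, Sym2.mem_mk_right _ _⟩
    rw [Finset.mem_singleton] at haS hbS
    exact hab.ne (haS.trans hbS.symm)

lemma pms_empty (G : SimpleGraph V) : IsPMS G (∅ : Finset V) := by
  refine ⟨∅, ⟨?_, ?_⟩, ?_⟩
  · simp
  · simp
  · intro x; simp

lemma pm_two : pmPoly (SimpleGraph.cycleGraph 2) Finset.univ = 1 + X := by
  classical
  have hps : (Finset.univ : Finset (Fin 2)).powerset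
      = {∅, {0}, {1}, Finset.univ} := by decide
  have h0 : ¬ IsPMS (SimpleGraph.cycleGraph 2) {0} := not_pms_singleton _ _
  have h1 : ¬ IsPMS (SimpleGraph.cycleGraph 2) {1} := not_pms_singleton _ _
  have hu : IsPMS (SimpleGraph.cycleGraph 2) Finset.univ := by
    refine ⟨{s(0, 1)}, ⟨?_, ?_⟩, ?_⟩
    · intro e he
      simp only [Finset.coe_singleton, Set.mem_singleton_iff] at he
      subst he
      rw [SimpleGraph.mem_edgeSet, SimpleGraph.cycleGraph_two_eq_top]
      decide
    · intro e he f hf hef x hx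
      rw [Finset.mem_singleton] at he hf
      exact absurd (he.trans hf.symm) hef
    · intro x
      simp only [Finset.mem_univ, true_iff, Finset.mem_singleton]
      refine ⟨s(0,1), rfl, ?_⟩
      fin_cases x <;> decide
  rw [pmPoly, hps]
  rw [Finset.sum_insert (by decide), Finset.sum_insert (by decide),
    Finset.sum_insert (by decide), Finset.sum_singleton]
  rw [if_pos (pms_empty _), if_neg h0, if_neg h1, if_pos hu]
  norm_num

lemma link1 (j : ℕ) (hj : 1 ≤ j) :
    pmPoly (SimpleGraph.cycleGraph (2 * j)) Finset.univ = qPoly (2 * j) - X ^ j := by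
  rcases eq_or_ne j 1 with rfl | h
  · rw [show 2 * 1 = 2 from rfl, pm_two, qPoly_two]
    ring
  · exact link j (by omega)

lemma pmPoly_cycle_congr {a b : ℕ} (h : a = b) :
    pmPoly (SimpleGraph.cycleGraph a) Finset.univ
      = pmPoly (SimpleGraph.cycleGraph b) Finset.univ := by subst h; rfl

theorem stmt12 (k : ℕ) (hk : 3 ≤ k) :
    pmPoly (SimpleGraph.cycleGraph (2 * k)) Finset.univ =
      (1 + 2 * X) * pmPoly (SimpleGraph.cycleGraph (2 * k - 2)) Finset.univ -
        X ^ 2 * pmPoly (SimpleGraph.cycleGraph (2 * k - 4)) Finset.univ + X ^ (k - 1) := by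
  obtain ⟨m, rfl⟩ : ∃ m, k = m + 3 := ⟨k - 3, by omega⟩
  rw [pmPoly_cycle_congr (show 2*(m+3)-2 = 2*(m+2) from by omega),
    pmPoly_cycle_congr (show 2*(m+3)-4 = 2*(m+1) from by omega)]
  rw [link1 (m + 3) (by omega), link1 (m + 2) (by omega), link1 (m + 1) (by omega)]
  rw [show 2*(m+3) = 2*m+6 from by omega, show 2*(m+2) = 2*m+4 from by omega,
    show 2*(m+1) = 2*m+2 from by omega, show m+3-1 = m+2 from by omega]
  rw [q_identity m]
  ring
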